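/- Correctness of the unfolding translation for EU: let K=(V,E,ℓ) be a finite Kripke structure with total E. Define, for states x and sets X ⊆ V with x ∈ X, the predicate T(x,X) by T(x,X) = (K,x ⊨ ψ) ∨ ((K,x ⊨ φ) ∧ ∃x' . (x,x') ∈ E ∧ x' ∉ X ∧ T(x', X ∪ {x'})) (well-founded recursion on |V| − |X|). Then K,x ⊨ E φ U ψ iff T(x, {x}). -/

import Mathlib

/-- `K, x ⊨ E φ U ψ` (structure semantics over infinite paths). -/
def SatEU {V : Type*} (E : V → V → Prop) (φ ψ : V → Prop) (x : V) : Prop :=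
  ∃ ρ : ℕ → V, (∀ i, E (ρ i) (ρ (i + 1))) ∧ ρ 0 = x ∧
    ∃ i, ψ (ρ i) ∧ ∀ j < i, φ (ρ j)

/-- Unfolding predicate for `EU`:
`T(x,X) = (x ⊨ ψ) ∨ ((x ⊨ φ) ∧ ∃x'. (x,x') ∈ E ∧ x' ∉ X ∧ T(x', X ∪ {x'}))`,
by well-founded recursion on `|V| − |X|`. -/
def TUnf {V : Type*} [Fintype V] [DecidableEq V] (E : V → V → Prop)
    (φ ψ : V → Prop) (x : V) (X : Finset V) : Prop :=
  ψ x ∨ (φ x ∧ ∃ x', E x x' ∧ ∃ _ : x' ∉ X, TUnf E φ ψ x' (insert x' X))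
termination_by Fintype.card V - X.card
decreasing_by
  rename_i hx'
  have h1 := Finset.card_insert_of_notMem hx'
  have h2 := Finset.card_le_univ (insert x' X)
  omega

section Aux

open Classical in
/-- Finite witness: a path of length `n` from `x` ending in `ψ`, with `φ` before. -/
private def Wit {V : Type*} (E : V → V → Prop) (φ ψ : V → Prop) (n : ℕ) (x : V) : Prop :=
  ∃ σ : ℕ → V, σ 0 = x ∧ (∀ j < n, E (σ j) (σ (j + 1))) ∧ ψ (σ n) ∧ ∀ j < n, φ (σ j)

private lemma wit_to_tunf {V : Type*} [Fintype V] [DecidableEq V] (E : V → V → Prop)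
    (φ ψ : V → Prop) :
    ∀ n x (X : Finset V), Wit E φ ψ n x → (∀ m < n, ¬ Wit E φ ψ m x) →
      (∀ y ∈ X, ∀ m, Wit E φ ψ m y → n ≤ m) → TUnf E φ ψ x X := by
  intro n
  induction n using Nat.strong_induction_on with
  | _ n ih =>
    intro x X hW hmin hX
    obtain ⟨σ, hσ0, hedge, hψ, hφ⟩ := hW
    rw [TUnf]
    match n with
    | 0 => exact Or.inl (hσ0 ▸ hψ)
    | Nat.succ k =>
      refine Or.inr ⟨hσ0 ▸ hφ 0 (Nat.succ_pos k), σ 1, hσ0 ▸ hedge 0 (Nat.succ_pos k), ?_⟩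
      have hWx' : Wit E φ ψ k (σ 1) := by
        refine ⟨fun j => σ (j + 1), rfl, fun j hj => hedge (j + 1) (by omega),
          hψ, fun j hj => hφ (j + 1) (by omega)⟩
      have hminx' : ∀ m < k, ¬ Wit E φ ψ m (σ 1) := by
        intro m hm hWm
        obtain ⟨τ, hτ0, hτe, hτψ, hτφ⟩ := hWm
        apply hmin (m + 1) (by omega)
        refine ⟨fun j => match j with | 0 => x | Nat.succ j => τ j, rfl, ?_, hτψ, ?_⟩
        · intro j hj
          match j with
          | 0 => simpa [hτ0, hσ0] using hedge 0 (Nat.succ_pos k)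
          | Nat.succ j => exact hτe j (by omega)
        · intro j hj
          match j with
          | 0 => exact hσ0 ▸ hφ 0 (Nat.succ_pos k)
          | Nat.succ j => exact hτφ j (by omega)
      have hx'notX : σ 1 ∉ X := fun hmem => by
        have := hX _ hmem k hWx'; omega
      refine ⟨hx'notX, ih k (by omega) _ _ hWx' hminx' ?_⟩
      intro y hy m hWm
      rcases Finset.mem_insert.mp hy with h | h
      · subst h; exact Nat.not_lt.mp (fun hlt => hminx' m hlt hWm)
      · have := hX y h m hWm; omega

private lemma tunf_to_sat {V : Type*} [Fintype V] [DecidableEq V] (E : V → V → Prop)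
    (hE : ∀ v, ∃ w, E v w) (φ ψ : V → Prop) :
    ∀ k (X : Finset V) x, Fintype.card V - X.card ≤ k → TUnf E φ ψ x X →
      SatEU E φ ψ x := by
  -- infinite path builder
  have hpath : ∀ x : V, ∃ ρ : ℕ → V, ρ 0 = x ∧ ∀ i, E (ρ i) (ρ (i + 1)) := by
    intro x
    refine ⟨fun n => (fun v => (hE v).choose)^[n] x, rfl, fun i => ?_⟩
    show E _ ((fun v => (hE v).choose)^[i+1] x)
    rw [Function.iterate_succ_apply']
    exact ((hE _).choose_spec)
  intro k
  induction k with
  | zero =>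
    intro X x hcard hT
    rw [TUnf] at hT
    rcases hT with hψ | ⟨_, x', _, hx', _⟩
    · obtain ⟨ρ, hρ0, hρe⟩ := hpath x
      exact ⟨ρ, hρe, hρ0, 0, hρ0 ▸ hψ, fun j hj => absurd hj (Nat.not_lt_zero j)⟩
    · exfalso
      have h1 := Finset.card_insert_of_notMem hx'
      have h2 := Finset.card_le_univ (insert x' X)
      omega
  | succ k ih =>
    intro X x hcard hT
    rw [TUnf] at hT
    rcases hT with hψ | ⟨hφ, x', hexx', hx', hT'⟩
    · obtain ⟨ρ, hρ0, hρe⟩ := hpath x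
      exact ⟨ρ, hρe, hρ0, 0, hρ0 ▸ hψ, fun j hj => absurd hj (Nat.not_lt_zero j)⟩
    · have : Fintype.card V - (insert x' X).card ≤ k := by
        have h1 := Finset.card_insert_of_notMem hx'
        omega
      obtain ⟨ρ', hρe, hρ0, i, hψi, hφj⟩ := ih _ _ this hT'
      refine ⟨fun n => match n with | 0 => x | Nat.succ n => ρ' n, ?_, rfl, i + 1, hψi, ?_⟩
      · intro n
        match n with
        | 0 => simpa [hρ0] using hexx'
        | Nat.succ n => exact hρe n
      · intro j hj
        match j with
        | 0 => exact hφ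
        | Nat.succ j => exact hφj j (by omega)

end Aux

/-- Correctness of the unfolding translation for `EU`:
`K, x ⊨ E φ U ψ` iff `T(x, {x})`. -/
theorem eu_unfolding_correct {V : Type*} [Fintype V] [DecidableEq V]
    (E : V → V → Prop) (hE : ∀ v, ∃ w, E v w) (φ ψ : V → Prop) (x : V) :
    SatEU E φ ψ x ↔ TUnf E φ ψ x {x} := by
  constructor
  · rintro ⟨ρ, hρe, hρ0, i, hψi, hφj⟩
    classical
    have hW : ∃ n, Wit E φ ψ n x := ⟨i, ρ, hρ0, fun j _ => hρe j, hψi, hφj⟩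
    let n := Nat.find hW
    exact wit_to_tunf E φ ψ n x {x} (Nat.find_spec hW)
      (fun m hm => Nat.find_min hW hm)
      (fun y hy m hWm => by
        rcases Finset.mem_singleton.mp hy with rfl
        exact Nat.find_min' hW hWm)
  · intro hT
    exact tunf_to_sat E hE φ ψ (Fintype.card V - Finset.card {x}) {x} x le_rfl hT
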